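/- Let X be uniform on S = [0,a] ∪ [b,c] with 0 ≤ a ≤ b ≤ c, and let X̃ be uniform on [0, a + (c-b)]. For any measurable encoder f on S with countable range, define f̃ on [0, a+(c-b)] by f̃(x) = f(x) for x ∈ [0,a] and f̃(x) = f(x + (b-a)) for x ∈ (a, a+(c-b)]. Then f̃(X̃) has the same distribution (hence the same entropy) as f(X), and the minimal expected L1 distortion of each quantization cell of f̃ (using its median as reconstruction) is at most that of the corresponding cell of f. -/
import Mathlib


open MeasureTheory

/-- Collapsing the two-interval support `S = [0,a] ∪ [b,c]` to the single interval
`[0, a+(c-b)]`: the encoder `f̃(x) = f(x)` for `x ≤ a`, `f̃(x) = f(x+(b-a))` otherwise, induces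
the same index distribution (hence the same entropy) on `Unif([0, a+(c-b)])` as `f` does on
`Unif(S)`, and the minimal expected `L1` distortion of each cell of `f̃` (with a median, i.e.
`L1`-optimal, reconstruction) is at most that of the corresponding cell of `f`. -/
theorem stmt8 (a b c : ℝ) (h0a : 0 ≤ a) (hab : a ≤ b) (hbc : b ≤ c)
    (hpos : 0 < a + (c - b)) (f : ℝ → ℕ) (hf : Measurable f) :
    (∀ i : ℕ,
      volume {x ∈ Set.Icc 0 a ∪ Set.Icc b c | f x = i} =
        volume {x ∈ Set.Icc 0 (a + (c - b)) |
          (if x ≤ a then f x else f (x + (b - a))) = i}) ∧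
    (∀ i : ℕ,
      (⨅ t : ℝ, ∫ x in {x ∈ Set.Icc 0 (a + (c - b)) |
          (if x ≤ a then f x else f (x + (b - a))) = i}, |x - t|) ≤
        ⨅ t : ℝ, ∫ x in {x ∈ Set.Icc 0 a ∪ Set.Icc b c | f x = i}, |x - t|) := by
  set d := b - a with hd
  have hd0 : 0 ≤ d := by simp [hd]; linarith
  -- the sets
  set A : ℕ → Set ℝ := fun i => Set.Icc 0 a ∩ f ⁻¹' {i} with hA
  set B : ℕ → Set ℝ := fun i => Set.Icc b c ∩ f ⁻¹' {i} with hB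
  set B' : ℕ → Set ℝ := fun i => Set.Ioc b c ∩ f ⁻¹' {i} with hB'
  set Bt : ℕ → Set ℝ := fun i => (· + d) ⁻¹' (B' i) with hBt
  have hmA : ∀ i, MeasurableSet (A i) := fun i =>
    measurableSet_Icc.inter (hf (measurableSet_singleton i))
  have hmB : ∀ i, MeasurableSet (B i) := fun i =>
    measurableSet_Icc.inter (hf (measurableSet_singleton i))
  have hmB' : ∀ i, MeasurableSet (B' i) := fun i =>
    measurableSet_Ioc.inter (hf (measurableSet_singleton i))
  have hmBt : ∀ i, MeasurableSet (Bt i) := fun i =>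
    (measurable_add_const d) (hmB' i)
  -- set identifications
  have hBtEq : ∀ i, Bt i = Set.Ioc a (a + (c - b)) ∩ ((fun x => f (x + d)) ⁻¹' {i}) := by
    intro i
    ext x
    simp only [hBt, hB', Set.mem_preimage, Set.mem_inter_iff, Set.mem_Ioc,
      Set.mem_singleton_iff]
    constructor
    · rintro ⟨⟨h1, h2⟩, h3⟩
      exact ⟨⟨by linarith, by linarith⟩, h3⟩
    · rintro ⟨⟨h1, h2⟩, h3⟩
      exact ⟨⟨by linarith, by linarith⟩, h3⟩
  have hCeq : ∀ i, {x ∈ Set.Icc 0 a ∪ Set.Icc b c | f x = i} = A i ∪ B i := by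
    intro i
    ext x
    simp only [Set.mem_setOf_eq, Set.mem_union, hA, hB, Set.mem_inter_iff,
      Set.mem_preimage, Set.mem_singleton_iff]
    tauto
  have hCtEq : ∀ i, {x ∈ Set.Icc 0 (a + (c - b)) |
      (if x ≤ a then f x else f (x + (b - a))) = i} = A i ∪ Bt i := by
    intro i
    rw [hBtEq i]
    ext x
    simp only [Set.mem_setOf_eq, Set.mem_union, hA, Set.mem_inter_iff, Set.mem_Icc,
      Set.mem_Ioc, Set.mem_preimage, Set.mem_singleton_iff]
    constructor
    · rintro ⟨⟨h0, h1⟩, hif⟩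
      by_cases hxa : x ≤ a
      · exact Or.inl ⟨⟨h0, hxa⟩, by simpa [hxa] using hif⟩
      · exact Or.inr ⟨⟨lt_of_not_ge hxa, h1⟩, by simpa [hxa, hd] using hif⟩
    · rintro (⟨⟨h0, h1⟩, hfx⟩ | ⟨⟨h1, h2⟩, hfx⟩)
      · exact ⟨⟨h0, by linarith⟩, by simp [h1, hfx]⟩
      · have hxa : ¬ x ≤ a := not_le.mpr h1
        exact ⟨⟨by linarith, h2⟩, by simpa [hxa, hd] using hfx⟩
  -- disjointness
  have hdisjAB : ∀ i, Disjoint (A i) (B' i) := by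
    intro i
    apply Set.disjoint_left.mpr
    rintro x ⟨⟨_, hx1⟩, _⟩ ⟨⟨hx2, _⟩, _⟩
    linarith
  have hdisjABt : ∀ i, Disjoint (A i) (Bt i) := by
    intro i
    rw [hBtEq i]
    apply Set.disjoint_left.mpr
    rintro x ⟨⟨_, hx1⟩, _⟩ ⟨⟨hx2, _⟩, _⟩
    linarith
  -- B ae equal to B'
  have hBsub : ∀ i, B i ⊆ B' i ∪ {b} := by
    intro i x hx
    rcases hx with ⟨⟨hx1, hx2⟩, hx3⟩
    rcases eq_or_lt_of_le hx1 with h | h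
    · exact Or.inr (by simp [h.symm])
    · exact Or.inl ⟨⟨h, hx2⟩, hx3⟩
  have hBae : ∀ i, B i =ᵐ[volume] B' i := by
    intro i
    rw [Filter.eventuallyEq_set]
    have hnull : volume ({b} : Set ℝ) = 0 := measure_singleton b
    filter_upwards [measure_eq_zero_iff_ae_notMem.mp hnull] with x hx
    constructor
    · intro h
      rcases hBsub i h with h' | h'
      · exact h'
      · exact absurd h' hx
    · rintro ⟨⟨h1, h2⟩, h3⟩
      exact ⟨⟨le_of_lt h1, h2⟩, h3⟩
  -- subsets of Icc 0 c for integrability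
  have hsubA : ∀ i, A i ⊆ Set.Icc 0 c := by
    rintro i x ⟨⟨h1, h2⟩, _⟩; exact ⟨h1, by linarith⟩
  have hsubB' : ∀ i, B' i ⊆ Set.Icc 0 c := by
    rintro i x ⟨⟨h1, h2⟩, _⟩; exact ⟨by linarith, h2⟩
  have hsubBt : ∀ i, Bt i ⊆ Set.Icc 0 c := by
    intro i
    rw [hBtEq i]
    rintro x ⟨⟨h1, h2⟩, _⟩; exact ⟨by linarith, by linarith⟩
  have hint : ∀ (t : ℝ) (s : Set ℝ), s ⊆ Set.Icc 0 c →
      IntegrableOn (fun x => |x - t|) s volume := by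
    intro t s hs
    exact (((continuous_id.sub continuous_const).abs).integrableOn_Icc).mono_set hs
  constructor
  · -- volume equality
    intro i
    rw [hCeq i, hCtEq i]
    have h1 : volume (A i ∪ B i) = volume (A i ∪ B' i) :=
      measure_congr ((Filter.EventuallyEq.refl _ _).union (hBae i))
    rw [h1, measure_union (hdisjAB i) (hmB' i), measure_union (hdisjABt i) (hmBt i)]
    congr 1
    exact (measure_preimage_add_right volume d (B' i)).symm
  · -- distortion inequality
    intro i
    have hmC : MeasurableSet {x ∈ Set.Icc 0 (a + (c - b)) |
        (if x ≤ a then f x else f (x + (b - a))) = i} := by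
      rw [hCtEq i]
      exact (hmA i).union (hmBt i)
    have hbdd : BddBelow (Set.range fun t : ℝ => ∫ x in {x ∈ Set.Icc 0 (a + (c - b)) |
        (if x ≤ a then f x else f (x + (b - a))) = i}, |x - t|) := by
      refine ⟨0, ?_⟩
      rintro _ ⟨t, rfl⟩
      exact setIntegral_nonneg hmC fun x _ => abs_nonneg _
    refine le_ciInf fun t => ?_
    set g : ℝ := max (min t a) (t - d) with hg
    refine (ciInf_le hbdd g).trans ?_
    -- pointwise inequalities
    have key1 : ∀ x ∈ A i, |x - g| ≤ |x - t| := by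
      rintro x ⟨⟨hx0, hx1⟩, -⟩
      rcases le_total t a with hta | hta
      · have hgt : g = t := by
          rw [hg, min_eq_left hta, max_eq_left (by linarith)]
        rw [hgt]
      · have hga : a ≤ g := le_trans (le_of_eq (min_eq_right hta).symm) (le_max_left _ _)
        have hgt : g ≤ t := by
          rw [hg]
          exact max_le (le_trans (min_le_left _ _) le_rfl) (by linarith)
        rw [abs_of_nonpos (by linarith), abs_of_nonpos (by linarith)]
        linarith
    have key2 : ∀ u ∈ B' i, |u - d - g| ≤ |u - t| := by
      rintro u ⟨⟨hu1, hu2⟩, -⟩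
      rcases le_total b t with hbt | hbt
      · have hgt : g = t - d := by
          rw [hg, min_eq_right (by linarith), max_eq_right (by linarith)]
        rw [hgt]
        have h : u - d - (t - d) = u - t := by ring
        rw [h]
      · have hg1 : t - d ≤ g := le_max_right _ _
        have hg2 : g ≤ u - d := by
          rw [hg]
          refine max_le ?_ (by linarith)
          exact le_trans (min_le_right _ _) (by linarith)
        rw [abs_of_nonneg (by linarith), abs_of_nonneg (by linarith)]
        linarith
    -- rewrite both integrals
    rw [hCtEq i, hCeq i]
    have hRHS : ∫ x in A i ∪ B i, |x - t| = ∫ x in A i ∪ B' i, |x - t| :=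
      setIntegral_congr_set ((Filter.EventuallyEq.refl _ _).union (hBae i))
    rw [hRHS,
      setIntegral_union (hdisjABt i) (hmBt i) (hint g _ (hsubA i)) (hint g _ (hsubBt i)),
      setIntegral_union (hdisjAB i) (hmB' i) (hint t _ (hsubA i)) (hint t _ (hsubB' i))]
    have htrans : ∫ x in Bt i, |x - g| = ∫ u in B' i, |u - d - g| := by
      have h := (measurePreserving_add_right volume d).setIntegral_preimage_emb
        (MeasurableEquiv.addRight d).measurableEmbedding (fun u => |u - d - g|) (B' i)
      rw [hBt, ← h]
      congr 1
      ext x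
      simp [MeasurableEquiv.addRight]
    have h1 : ∫ x in A i, |x - g| ≤ ∫ x in A i, |x - t| :=
      setIntegral_mono_on (hint g _ (hsubA i)) (hint t _ (hsubA i)) (hmA i) key1
    have h2 : ∫ x in Bt i, |x - g| ≤ ∫ u in B' i, |u - t| := by
      rw [htrans]
      refine setIntegral_mono_on ?_ (hint t _ (hsubB' i)) (hmB' i) key2
      have : IntegrableOn (fun u => |u - (d + g)|) (B' i) volume := hint (d + g) _ (hsubB' i)
      refine this.congr_fun (fun u _ => by ring_nf) (hmB' i)
    linarith
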